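/- Let f : ℝ → ℂ be measurable with 0 < α ≤ |f(x)| ≤ β < ∞, and define (TΨ)(x) := f(x)Ψ(-x) on L²(ℝ, dx). Then the powers of T satisfy: for n > 0, (TⁿΨ)(x) = (∏_{k=1}^{n} f((-1)^{k+1}x)) Ψ((-1)ⁿx). Moreover the family {Tⁿ : n ∈ ℤ} is uniformly bounded in operator norm if and only if |f(x)f(-x)| = 1 for almost every x. -/

import Mathlib

open MeasureTheory
open scoped ENNReal

private lemma iterT_formula (f : ℝ → ℂ) (Ψ : ℝ → ℂ) :
    ∀ n : ℕ, ∀ x : ℝ, (fun Ψ (x : ℝ) => f x * Ψ (-x))^[n] Ψ x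
      = (∏ k ∈ Finset.range n, f ((-1 : ℝ) ^ k * x)) * Ψ ((-1 : ℝ) ^ n * x) := by
  intro n
  induction n with
  | zero => intro x; simp
  | succ n ih =>
    intro x
    have hx : ∀ k : ℕ, (-1 : ℝ) ^ k * -x = (-1 : ℝ) ^ (k + 1) * x := fun k => by
      rw [pow_succ]; ring
    rw [Function.iterate_succ_apply']
    show f x * ((fun Ψ (x : ℝ) => f x * Ψ (-x))^[n] Ψ) (-x) = _
    rw [ih (-x), Finset.prod_range_succ']
    simp only [hx, pow_zero, one_mul]
    ring

private lemma iterS_formula (f : ℝ → ℂ) (Ψ : ℝ → ℂ) :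
    ∀ n : ℕ, ∀ x : ℝ, (fun Ψ (x : ℝ) => (f (-x))⁻¹ * Ψ (-x))^[n] Ψ x
      = (∏ k ∈ Finset.range n, f ((-1 : ℝ) ^ (k + 1) * x))⁻¹ * Ψ ((-1 : ℝ) ^ n * x) := by
  intro n
  induction n with
  | zero => intro x; simp
  | succ n ih =>
    intro x
    have hx : ∀ k : ℕ, (-1 : ℝ) ^ k * -x = (-1 : ℝ) ^ (k + 1) * x := fun k => by
      rw [pow_succ]; ring
    have hx0 : (-1 : ℝ) ^ (0 + 1) * x = -x := by norm_num
    rw [Function.iterate_succ_apply']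
    show (f (-x))⁻¹ * ((fun Ψ (x : ℝ) => (f (-x))⁻¹ * Ψ (-x))^[n] Ψ) (-x) = _
    rw [ih (-x), Finset.prod_range_succ']
    simp only [hx, hx0, pow_zero, one_mul]
    rw [mul_inv]
    ring

private lemma prodEvenT (f : ℝ → ℂ) : ∀ m : ℕ, ∀ x : ℝ,
    ∏ k ∈ Finset.range (2 * m), f ((-1 : ℝ) ^ k * x) = (f x * f (-x)) ^ m := by
  intro m
  induction m with
  | zero => intro x; simp
  | succ m ih =>
    intro x
    have h1 : (-1 : ℝ) ^ (2 * m) = 1 := by rw [pow_mul]; norm_num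
    have h2 : (-1 : ℝ) ^ (2 * m + 1) = -1 := by rw [pow_succ, h1]; norm_num
    have hn : 2 * (m + 1) = (2 * m + 1) + 1 := by ring
    rw [hn, Finset.prod_range_succ, Finset.prod_range_succ, ih, h1, h2, pow_succ]
    simp only [one_mul, neg_one_mul]
    ring

private lemma prodEvenS (f : ℝ → ℂ) : ∀ m : ℕ, ∀ x : ℝ,
    ∏ k ∈ Finset.range (2 * m), f ((-1 : ℝ) ^ (k + 1) * x) = (f x * f (-x)) ^ m := by
  intro m
  induction m with
  | zero => intro x; simp
  | succ m ih =>
    intro x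
    have h1 : (-1 : ℝ) ^ (2 * m + 1) = -1 := by rw [pow_succ, pow_mul]; norm_num
    have h2 : (-1 : ℝ) ^ (2 * m + 1 + 1) = 1 := by rw [pow_succ, h1]; norm_num
    have hn : 2 * (m + 1) = (2 * m + 1) + 1 := by ring
    rw [hn, Finset.prod_range_succ, Finset.prod_range_succ, ih, h1, h2, pow_succ]
    simp only [one_mul, neg_one_mul]
    ring

private lemma prodOddT (f : ℝ → ℂ) (m : ℕ) (x : ℝ) :
    ∏ k ∈ Finset.range (2 * m + 1), f ((-1 : ℝ) ^ k * x) = (f x * f (-x)) ^ m * f x := by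
  have h1 : (-1 : ℝ) ^ (2 * m) = 1 := by rw [pow_mul]; norm_num
  rw [Finset.prod_range_succ, prodEvenT, h1, one_mul]

private lemma prodOddS (f : ℝ → ℂ) (m : ℕ) (x : ℝ) :
    ∏ k ∈ Finset.range (2 * m + 1), f ((-1 : ℝ) ^ (k + 1) * x)
      = (f x * f (-x)) ^ m * f (-x) := by
  have h1 : (-1 : ℝ) ^ (2 * m + 1) = -1 := by rw [pow_succ, pow_mul]; norm_num
  rw [Finset.prod_range_succ, prodEvenS, h1, neg_one_mul]

private lemma eLpNorm_real_mul (c : ℝ) (hc : 0 ≤ c) (Ψ : ℝ → ℂ) :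
    eLpNorm (fun x : ℝ => (c : ℂ) * Ψ x) 2 volume = ENNReal.ofReal c * eLpNorm Ψ 2 volume := by
  have h : (fun x : ℝ => (c : ℂ) * Ψ x) = (c : ℂ) • Ψ := rfl
  rw [h, eLpNorm_const_smul]
  congr 1
  rw [← ofReal_norm, Complex.norm_real, Real.norm_of_nonneg hc]

private lemma eLpNorm_mul_le_of_bound (G Ψ : ℝ → ℂ) (c : ℝ) (hc : 0 ≤ c)
    (h : ∀ᵐ x ∂(volume : Measure ℝ), ‖G x‖ ≤ c) :
    eLpNorm (fun x => G x * Ψ x) 2 volume ≤ ENNReal.ofReal c * eLpNorm Ψ 2 volume := by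
  have hcc : ‖(c : ℂ)‖ = c := by rw [Complex.norm_real, Real.norm_of_nonneg hc]
  have h1 : eLpNorm (fun x => G x * Ψ x) 2 volume
      ≤ eLpNorm (fun x : ℝ => (c : ℂ) * Ψ x) 2 volume := by
    apply eLpNorm_mono_ae
    filter_upwards [h] with x hx
    rw [norm_mul, norm_mul, hcc]
    exact mul_le_mul_of_nonneg_right hx (norm_nonneg _)
  exact h1.trans_eq (eLpNorm_real_mul c hc Ψ)

private lemma eLpNorm_comp_neg (Ψ : ℝ → ℂ)
    (hΨ : AEStronglyMeasurable Ψ (volume : Measure ℝ)) :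
    eLpNorm (fun x : ℝ => Ψ (-x)) 2 volume = eLpNorm Ψ 2 volume :=
  eLpNorm_comp_measurePreserving hΨ (Measure.measurePreserving_neg _)

private lemma ae_norm_le_one_of_pow_bound (g : ℝ → ℂ) (hg : Measurable g) (c : ℝ)
    (hbound : ∀ n : ℕ, ∀ Ψ : ℝ → ℂ, MemLp Ψ 2 (volume : Measure ℝ) →
      eLpNorm (fun x => (g x) ^ n * Ψ x) 2 volume
        ≤ ENNReal.ofReal c * eLpNorm Ψ 2 volume) :
    ∀ᵐ x ∂(volume : Measure ℝ), ‖g x‖ ≤ 1 := by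
  by_contra hcon
  rw [ae_iff] at hcon
  have hcover : {x : ℝ | ¬ ‖g x‖ ≤ 1}
      ⊆ ⋃ (j : ℕ) (N : ℕ),
        ({x : ℝ | 1 + 1 / ((j : ℝ) + 1) ≤ ‖g x‖} ∩ Set.Icc (-(N : ℝ)) N) := by
    intro x hx
    simp only [Set.mem_setOf_eq, not_le] at hx
    obtain ⟨j, hj⟩ := exists_nat_one_div_lt (sub_pos.2 hx)
    refine Set.mem_iUnion.2 ⟨j, Set.mem_iUnion.2 ⟨⌈|x|⌉₊, ⟨?_, ?_⟩⟩⟩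
    · simp only [Set.mem_setOf_eq]; linarith
    · have h1 := Nat.le_ceil |x|
      have h2 := neg_abs_le x
      have h3 := le_abs_self x
      constructor <;> [linarith; linarith]
  obtain ⟨j, N, hjN⟩ : ∃ j N : ℕ,
      volume ({x : ℝ | 1 + 1 / ((j : ℝ) + 1) ≤ ‖g x‖} ∩ Set.Icc (-(N : ℝ)) N) ≠ 0 := by
    by_contra hall
    push_neg at hall
    exact hcon (measure_mono_null hcover
      (measure_iUnion_null fun j => measure_iUnion_null fun N => hall j N))
  set δ : ℝ := 1 / ((j : ℝ) + 1) with hδdef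
  have hδpos : 0 < δ := by positivity
  set B : Set ℝ := {x : ℝ | 1 + δ ≤ ‖g x‖} ∩ Set.Icc (-(N : ℝ)) N with hBdef
  have hBmeas : MeasurableSet B :=
    (measurableSet_le measurable_const hg.norm).inter measurableSet_Icc
  have hBfin : volume B ≠ ⊤ := by
    refine ne_top_of_le_ne_top ?_ (measure_mono Set.inter_subset_right)
    simp [Real.volume_Icc]
  set Ψ : ℝ → ℂ := B.indicator (fun _ => (1 : ℂ)) with hΨdef
  have hΨmem : MemLp Ψ 2 volume := memLp_indicator_const 2 hBmeas 1 (Or.inr hBfin)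
  have hNval : eLpNorm Ψ 2 volume = volume B ^ (1 / (2 : ℝ≥0∞).toReal) := by
    rw [hΨdef, eLpNorm_indicator_const hBmeas (by norm_num) (by norm_num)]
    simp
  have hNne0 : eLpNorm Ψ 2 volume ≠ 0 := by
    rw [hNval]
    simp only [ne_eq, ENNReal.rpow_eq_zero_iff, not_or, not_and_or]
    constructor
    · exact Or.inl hjN
    · exact Or.inl hBfin
  have hNnetop : eLpNorm Ψ 2 volume ≠ ⊤ := by
    rw [hNval]
    refine ENNReal.rpow_ne_top_of_nonneg (by norm_num) hBfin
  -- lower bound for each n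
  have hlow : ∀ n : ℕ, ENNReal.ofReal ((1 + δ) ^ n) * eLpNorm Ψ 2 volume
      ≤ eLpNorm (fun x => (g x) ^ n * Ψ x) 2 volume := by
    intro n
    rw [← eLpNorm_real_mul ((1 + δ) ^ n) (by positivity) Ψ]
    apply eLpNorm_mono_ae
    refine Filter.Eventually.of_forall fun x => ?_
    by_cases hxB : x ∈ B
    · have hΨx : Ψ x = 1 := by simp [hΨdef, Set.indicator_of_mem hxB]
      have hgx : 1 + δ ≤ ‖g x‖ := hxB.1
      rw [hΨx, norm_mul, norm_mul, norm_pow]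
      simp only [mul_one, norm_one]
      have : ((1 + δ) ^ n : ℝ) ≤ ‖g x‖ ^ n := by
        exact pow_le_pow_left₀ (by positivity) hgx n
      calc ‖((((1 + δ) ^ n : ℝ)) : ℂ)‖ = (1 + δ) ^ n := by
            rw [Complex.norm_real, Real.norm_of_nonneg (by positivity)]
        _ ≤ ‖g x‖ ^ n := this
    · have hΨx : Ψ x = 0 := by simp [hΨdef, Set.indicator_of_notMem hxB]
      simp [hΨx]
  -- combine with the upper bound
  have hub : ∀ n : ℕ, ((1 + δ) ^ n : ℝ) ≤ max c 0 := by
    intro n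
    have h1 := (hlow n).trans (hbound n Ψ hΨmem)
    have h2 : ENNReal.ofReal ((1 + δ) ^ n) ≤ ENNReal.ofReal (max c 0) := by
      have := (ENNReal.mul_le_mul_iff_left hNne0 hNnetop).1 h1
      exact this.trans (ENNReal.ofReal_le_ofReal (le_max_left c 0))
    exact (ENNReal.ofReal_le_ofReal_iff (le_max_right c 0)).1 h2
  obtain ⟨n, hn⟩ := pow_unbounded_of_one_lt (max c 0) (by linarith : (1 : ℝ) < 1 + δ)
  exact absurd (hub n) (not_le.mpr hn)

/-- For `(TΨ)(x) = f(x)Ψ(-x)` on `L²(ℝ)` with `0 < α ≤ |f| ≤ β < ∞`: the positive powers are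
`(TⁿΨ)(x) = (∏_{k=1}^{n} f((-1)^{k+1}x)) Ψ((-1)ⁿx)`, and the family `{Tⁿ : n ∈ ℤ}` (with
`T⁻¹ = S`, `(SΨ)(x) = f(-x)⁻¹Ψ(-x)`) is uniformly bounded in operator norm on `L²(ℝ)` if and
only if `|f(x)f(-x)| = 1` for almost every `x`. -/
theorem parity_times_multiplication_powers_and_nagy
    (f : ℝ → ℂ) (α β : ℝ) (hmeas : Measurable f)
    (hα : 0 < α) (hlb : ∀ x, α ≤ ‖f x‖) (hub : ∀ x, ‖f x‖ ≤ β)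
    (T S : (ℝ → ℂ) → (ℝ → ℂ))
    (hT : T = fun Ψ x => f x * Ψ (-x))
    (hS : S = fun Ψ x => (f (-x))⁻¹ * Ψ (-x)) :
    -- formula for positive powers
    (∀ n : ℕ, 0 < n → ∀ Ψ : ℝ → ℂ, ∀ x : ℝ,
      T^[n] Ψ x = (∏ k ∈ Finset.Icc 1 n, f ((-1 : ℝ) ^ (k + 1) * x)) * Ψ ((-1 : ℝ) ^ n * x)) ∧
    -- uniform boundedness iff |f(x)f(-x)| = 1 a.e.
    ((∃ c : ℝ, ∀ n : ℕ, ∀ Ψ : ℝ → ℂ, MemLp Ψ 2 (volume : Measure ℝ) →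
        eLpNorm (T^[n] Ψ) 2 volume ≤ ENNReal.ofReal c * eLpNorm Ψ 2 volume ∧
        eLpNorm (S^[n] Ψ) 2 volume ≤ ENNReal.ofReal c * eLpNorm Ψ 2 volume) ↔
      (∀ᵐ x : ℝ ∂volume, ‖f x * f (-x)‖ = 1)) := by
  subst hT hS
  set g : ℝ → ℂ := fun x => f x * f (-x) with hgdef
  have hgmeas : Measurable g := hmeas.mul (hmeas.comp measurable_neg)
  have hgnorm : ∀ x, ‖g x‖ = ‖f x * f (-x)‖ := fun x => rfl
  have hfne : ∀ x, f x ≠ 0 := by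
    intro x h
    have := hlb x
    rw [h, norm_zero] at this
    linarith
  have hgne : ∀ x, g x ≠ 0 := fun x => mul_ne_zero (hfne x) (hfne (-x))
  -- expressions for the even and odd iterates
  have hTeven : ∀ m : ℕ, ∀ Ψ : ℝ → ℂ,
      (fun Ψ (x : ℝ) => f x * Ψ (-x))^[2 * m] Ψ = fun x => (g x) ^ m * Ψ x := by
    intro m Ψ; funext x
    rw [iterT_formula, prodEvenT]
    have hx : (-1 : ℝ) ^ (2 * m) * x = x := by rw [pow_mul]; norm_num
    rw [hx]
  have hSeven : ∀ m : ℕ, ∀ Ψ : ℝ → ℂ,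
      (fun Ψ (x : ℝ) => (f (-x))⁻¹ * Ψ (-x))^[2 * m] Ψ = fun x => ((g x) ^ m)⁻¹ * Ψ x := by
    intro m Ψ; funext x
    rw [iterS_formula, prodEvenS]
    have hx : (-1 : ℝ) ^ (2 * m) * x = x := by rw [pow_mul]; norm_num
    rw [hx]
  have hTodd : ∀ m : ℕ, ∀ Ψ : ℝ → ℂ,
      (fun Ψ (x : ℝ) => f x * Ψ (-x))^[2 * m + 1] Ψ
        = fun x => ((g x) ^ m * f x) * Ψ (-x) := by
    intro m Ψ; funext x
    rw [iterT_formula, prodOddT]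
    have hx : (-1 : ℝ) ^ (2 * m + 1) * x = -x := by rw [pow_succ, pow_mul]; norm_num
    rw [hx]
  have hSodd : ∀ m : ℕ, ∀ Ψ : ℝ → ℂ,
      (fun Ψ (x : ℝ) => (f (-x))⁻¹ * Ψ (-x))^[2 * m + 1] Ψ
        = fun x => ((g x) ^ m * f (-x))⁻¹ * Ψ (-x) := by
    intro m Ψ; funext x
    rw [iterS_formula, prodOddS]
    have hx : (-1 : ℝ) ^ (2 * m + 1) * x = -x := by rw [pow_succ, pow_mul]; norm_num
    rw [hx]
  constructor
  · -- the formula for positive powers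
    intro n hn Ψ x
    rw [iterT_formula]
    congr 1
    symm
    rw [← Finset.Ico_add_one_right_eq_Icc, Finset.prod_Ico_eq_prod_range, Nat.add_sub_cancel]
    apply Finset.prod_congr rfl
    intro i _
    congr 2
    rw [show 1 + i + 1 = i + 2 from by ring, pow_add]
    norm_num
  · constructor
    · -- uniform bound implies |f(x)f(-x)| = 1 a.e.
      rintro ⟨c, hc⟩
      have h1 : ∀ᵐ x ∂(volume : Measure ℝ), ‖g x‖ ≤ 1 := by
        apply ae_norm_le_one_of_pow_bound g hgmeas c
        intro n Ψ hΨ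
        have := (hc (2 * n) Ψ hΨ).1
        rwa [hTeven n Ψ] at this
      have h2 : ∀ᵐ x ∂(volume : Measure ℝ), ‖(g x)⁻¹‖ ≤ 1 := by
        apply ae_norm_le_one_of_pow_bound (fun x => (g x)⁻¹) hgmeas.inv c
        intro n Ψ hΨ
        have := (hc (2 * n) Ψ hΨ).2
        rw [hSeven n Ψ] at this
        simpa only [inv_pow] using this
      filter_upwards [h1, h2] with x hx1 hx2
      rw [← hgnorm]
      refine le_antisymm hx1 ?_
      rw [norm_inv] at hx2
      have hpos : 0 < ‖g x‖ := norm_pos_iff.mpr (hgne x)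
      nlinarith [inv_mul_cancel₀ (ne_of_gt hpos)]
    · -- |f(x)f(-x)| = 1 a.e. implies uniform bound
      intro hae
      refine ⟨max (max β α⁻¹) 1, ?_⟩
      set c : ℝ := max (max β α⁻¹) 1 with hcdef
      have hc0 : (0 : ℝ) ≤ c := le_trans zero_le_one (le_max_right _ _)
      have hc1 : (1 : ℝ) ≤ c := le_max_right _ _
      have hcβ : β ≤ c := le_trans (le_max_left _ _) (le_max_left _ _)
      have hcα : α⁻¹ ≤ c := le_trans (le_max_right _ _) (le_max_left _ _)
      have haeg : ∀ᵐ x ∂(volume : Measure ℝ), ‖g x‖ = 1 := by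
        filter_upwards [hae] with x hx
        rw [hgnorm]; exact hx
      intro n Ψ hΨ
      have hnegΨ : eLpNorm (fun x : ℝ => Ψ (-x)) 2 volume = eLpNorm Ψ 2 volume :=
        eLpNorm_comp_neg Ψ hΨ.1
      rcases Nat.even_or_odd n with ⟨m, hm⟩ | ⟨m, hm⟩
      · have hn2 : n = 2 * m := by omega
        subst hn2
        constructor
        · rw [hTeven m Ψ]
          apply eLpNorm_mul_le_of_bound _ _ c hc0
          filter_upwards [haeg] with x hx
          rw [norm_pow, hx, one_pow]; exact hc1
        · rw [hSeven m Ψ]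
          apply eLpNorm_mul_le_of_bound _ _ c hc0
          filter_upwards [haeg] with x hx
          rw [norm_inv, norm_pow, hx, one_pow, inv_one]; exact hc1
      · subst hm
        constructor
        · rw [hTodd m Ψ]
          calc eLpNorm (fun x => ((g x) ^ m * f x) * Ψ (-x)) 2 volume
              ≤ ENNReal.ofReal c * eLpNorm (fun x : ℝ => Ψ (-x)) 2 volume := by
                apply eLpNorm_mul_le_of_bound _ _ c hc0
                filter_upwards [haeg] with x hx
                rw [norm_mul, norm_pow, hx, one_pow, one_mul]
                exact le_trans (le_trans (le_refl _) (hub x)) hcβ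
            _ = ENNReal.ofReal c * eLpNorm Ψ 2 volume := by rw [hnegΨ]
        · rw [hSodd m Ψ]
          calc eLpNorm (fun x => ((g x) ^ m * f (-x))⁻¹ * Ψ (-x)) 2 volume
              ≤ ENNReal.ofReal c * eLpNorm (fun x : ℝ => Ψ (-x)) 2 volume := by
                apply eLpNorm_mul_le_of_bound _ _ c hc0
                filter_upwards [haeg] with x hx
                rw [norm_inv, norm_mul, norm_pow, hx, one_pow, one_mul]
                refine le_trans ?_ hcα
                refine inv_anti₀ hα ?_
                exact le_trans (hlb (-x)) (le_refl _)
            _ = ENNReal.ofReal c * eLpNorm Ψ 2 volume := by rw [hnegΨ]
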